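/- Let A be a good s-balancer on the balancing graph G⁺ of a finite connected d-regular graph G, and let c ∈ ℕ. Then for every t ≥ 2, φ_t(c) ≤ φ_{t−1}(c) − Σ_{u∈V} Δ_t(c,u), where Δ_t(c,u) = min{x_{t−1}(u), c·d⁺ + s} − max{x_t(u), c·d⁺} if x_{t−1}(u) > x_t(u), x_{t−1}(u) > c·d⁺ and x_t(u) < c·d⁺ + s, and Δ_t(c,u) = 0 otherwise. In particular, the potential φ_t(c) is non-increasing in t. -/

import Mathlib

open Finset

/-- A `d`-regular connected symmetric graph `G` together with `dSelf` self-loops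
attached to every node (the balancing graph `G⁺`). -/
structure LBSetup (V : Type) [Fintype V] [DecidableEq V] where
  d : ℕ
  dSelf : ℕ
  Adj : V → V → Bool
  symm : ∀ u v : V, Adj u v → Adj v u
  loopless : ∀ u : V, ¬ Adj u u
  regular : ∀ u : V, (Finset.univ.filter fun v => Adj u v).card = d
  connected : ∀ u v : V, Relation.ReflTransGen (fun a b => Adj a b = true) u v

variable {V : Type} [Fintype V] [DecidableEq V]

/-- Degree `d⁺ = d + d°` of the balancing graph. -/
def LBSetup.dPlus (S : LBSetup V) : ℕ := S.d + S.dSelf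

/-- Neighbours of `u` in the original graph. -/
def LBSetup.nbrs (S : LBSetup V) (u : V) : Finset V :=
  Finset.univ.filter fun v => S.Adj u v

/-- A load-balancing algorithm on the balancing graph `G⁺`: integer flows on
original edges (`f`) and on self-loops (`g`), and load vectors `x`, satisfying
the conservation laws. Time steps start at `t = 1`. -/
structure LBAlgo (S : LBSetup V) where
  f : ℕ → V → V → ℕ
  g : ℕ → V → Fin S.dSelf → ℕ
  x : ℕ → V → ℕ
  flow_out : ∀ t, 1 ≤ t → ∀ u : V,
    x t u = (∑ v ∈ S.nbrs u, f t u v) + ∑ i : Fin S.dSelf, g t u i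
  flow_in : ∀ t, 1 ≤ t → ∀ u : V,
    x (t + 1) u = (∑ v ∈ S.nbrs u, f t v u) + ∑ i : Fin S.dSelf, g t u i

/-- Cumulative flow on the original edge `(u, v)` up to time `t`. -/
def LBAlgo.F {S : LBSetup V} (A : LBAlgo S) (t : ℕ) (u v : V) : ℕ :=
  ∑ τ ∈ Finset.Icc 1 t, A.f τ u v

/-- Cumulative flow on the `i`-th self-loop of `u` up to time `t`. -/
def LBAlgo.Gcum {S : LBSetup V} (A : LBAlgo S) (t : ℕ) (u : V) (i : Fin S.dSelf) : ℕ :=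
  ∑ τ ∈ Finset.Icc 1 t, A.g τ u i

/-- Cumulative δ-fairness: every edge (original or self-loop) of `u` carries at least
`⌊x_t(u)/d⁺⌋` tokens in every step, and cumulative flows on any two original edges
of `u` differ by at most `δ`. -/
def CumFair (S : LBSetup V) (A : LBAlgo S) (δ : ℝ) : Prop :=
  (∀ t, 1 ≤ t → ∀ u : V,
      (∀ v : V, S.Adj u v → A.x t u / S.dPlus ≤ A.f t u v) ∧
      (∀ i : Fin S.dSelf, A.x t u / S.dPlus ≤ A.g t u i)) ∧
  (∀ t : ℕ, ∀ u v w : V, S.Adj u v → S.Adj u w →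
      |(A.F t u v : ℝ) - (A.F t u w : ℝ)| ≤ δ)

/-- Maximum load at time `t`. -/
def maxLoad {S : LBSetup V} [Nonempty V] (A : LBAlgo S) (t : ℕ) : ℕ :=
  Finset.univ.sup' Finset.univ_nonempty (A.x t)

/-- Minimum load at time `t`. -/
def minLoad {S : LBSetup V} [Nonempty V] (A : LBAlgo S) (t : ℕ) : ℕ :=
  Finset.univ.inf' Finset.univ_nonempty (A.x t)

/-- Discrepancy at time `t`. -/
def disc {S : LBSetup V} [Nonempty V] (A : LBAlgo S) (t : ℕ) : ℕ :=
  maxLoad A t - minLoad A t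

/-- Transition matrix `P` of the balancing graph `G⁺`. -/
noncomputable def LBSetup.P (S : LBSetup V) : Matrix V V ℝ :=
  Matrix.of fun u v =>
    if S.Adj u v then (1 : ℝ) / S.dPlus
    else if u = v then (S.dSelf : ℝ) / S.dPlus else 0

/-- `μ` is the eigenvalue gap of `P`: `μ = 1 - λ₂` where `λ₂` is the
largest eigenvalue of `P` different from `1`. -/
def LBSetup.IsEigGap (S : LBSetup V) (μ : ℝ) : Prop :=
  ∃ lam : ℝ, μ = 1 - lam ∧ lam ∈ spectrum ℝ S.P ∧ lam ≠ 1 ∧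
    ∀ x ∈ spectrum ℝ S.P, x ≠ 1 → x ≤ lam

/-- Ceiling division `⌈a / b⌉` on naturals. -/
def cdiv (a b : ℕ) : ℕ := (a + b - 1) / b

/-- A good `s`-balancer: a cumulatively 1-fair balancer which is round-fair (every edge,
including self-loops, carries `⌊x_t(u)/d⁺⌋` or `⌈x_t(u)/d⁺⌉` tokens) and `s`-self-preferring
(at least `min{s, e(u)}` self-loops carry `⌈x_t(u)/d⁺⌉` tokens, where
`e(u) = x_t(u) - d⁺·⌊x_t(u)/d⁺⌋`). -/
def GoodSBalancer (S : LBSetup V) (A : LBAlgo S) (s : ℕ) : Prop :=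
  CumFair S A 1 ∧
  ∀ t, 1 ≤ t → ∀ u : V,
    (∀ v : V, S.Adj u v →
        A.f t u v = A.x t u / S.dPlus ∨ A.f t u v = cdiv (A.x t u) S.dPlus) ∧
    (∀ i : Fin S.dSelf,
        A.g t u i = A.x t u / S.dPlus ∨ A.g t u i = cdiv (A.x t u) S.dPlus) ∧
    min s (A.x t u % S.dPlus) ≤
      (Finset.univ.filter fun i : Fin S.dSelf =>
        A.g t u i = cdiv (A.x t u) S.dPlus).card

/-- The potential `φ_t(c) = Σ_v max{x_t(v) − c·d⁺, 0}`. -/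
def phi {S : LBSetup V} (A : LBAlgo S) (t : ℕ) (c : ℕ) : ℤ :=
  ∑ v : V, max ((A.x t v : ℤ) - (c : ℤ) * S.dPlus) 0

/-- The potential `φ'_t(c) = Σ_v max{c·d⁺ + s − x_t(v), 0}`. -/
def phi' {S : LBSetup V} (A : LBAlgo S) (s : ℕ) (t : ℕ) (c : ℕ) : ℤ :=
  ∑ v : V, max ((c : ℤ) * S.dPlus + (s : ℤ) - (A.x t v : ℤ)) 0

/-- One-step potential drop `Δ_t(c,u)` (here the step leading from time `t` to `t+1`). -/
def Delta {S : LBSetup V} (A : LBAlgo S) (s : ℕ) (t : ℕ) (c : ℕ) (u : V) : ℤ :=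
  if A.x (t + 1) u < A.x t u ∧ (c : ℤ) * S.dPlus < (A.x t u : ℤ) ∧
      (A.x (t + 1) u : ℤ) < (c : ℤ) * S.dPlus + s then
    min (A.x t u : ℤ) ((c : ℤ) * S.dPlus + s) -
      max (A.x (t + 1) u : ℤ) ((c : ℤ) * S.dPlus)
  else 0


/-! ### Auxiliary lemmas for the proof of `phi_potential_drop` -/

lemma le_cdiv_aux (X D : ℕ) (hD : 1 ≤ D) : X / D ≤ cdiv X D := by
  unfold cdiv
  apply Nat.div_le_div_right
  omega

lemma cdiv_le_succ_aux (X D : ℕ) (hD : 1 ≤ D) : cdiv X D ≤ X / D + 1 := by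
  have h1 := Nat.div_add_mod X D
  have h2 : X % D < D := Nat.mod_lt _ (by omega)
  unfold cdiv
  apply Nat.le_of_lt_succ
  have e2 : D * (X / D + 1 + 1) = D * (X / D) + D + D := by ring
  have h3 : X + D - 1 < D * (X / D + 1 + 1) := by
    rw [e2]; set m := D * (X / D); omega
  exact Nat.div_lt_of_lt_mul h3

lemma cdiv_eq_succ_aux (X D : ℕ) (hD : 1 ≤ D) (h : X % D ≠ 0) :
    cdiv X D = X / D + 1 := by
  have h1 := Nat.div_add_mod X D
  have h2 : X % D < D := Nat.mod_lt _ (by omega)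
  unfold cdiv
  apply Nat.div_eq_of_lt_le
  · have e1 : (X / D + 1) * D = D * (X / D) + D := by ring
    rw [e1]; set m := D * (X / D); omega
  · have e2 : (X / D + 1 + 1) * D = D * (X / D) + D + D := by ring
    rw [e2]; set m := D * (X / D); omega

/-- Sum, over edges incoming to `u` at step `t`, of `max (flow − c) 0`. -/
def TinD {S : LBSetup V} (A : LBAlgo S) (t c : ℕ) (u : V) : ℤ :=
  (∑ v ∈ S.nbrs u, max ((A.f t v u : ℤ) - (c : ℤ)) 0) +
    ∑ i : Fin S.dSelf, max ((A.g t u i : ℤ) - (c : ℤ)) 0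

/-- Sum, over edges outgoing from `u` at step `t`, of `max (flow − c) 0`. -/
def ToutD {S : LBSetup V} (A : LBAlgo S) (t c : ℕ) (u : V) : ℤ :=
  (∑ v ∈ S.nbrs u, max ((A.f t u v : ℤ) - (c : ℤ)) 0) +
    ∑ i : Fin S.dSelf, max ((A.g t u i : ℤ) - (c : ℤ)) 0

lemma delta_nonneg_aux {S : LBSetup V} (A : LBAlgo S) (s : ℕ) (hs1 : 1 ≤ s)
    (t c : ℕ) (u : V) : 0 ≤ Delta A s t c u := by
  unfold Delta
  split
  next h =>
    obtain ⟨h1, h2, h3⟩ := h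
    have h1' : (A.x (t + 1) u : ℤ) < (A.x t u : ℤ) := by exact_mod_cast h1
    have hs1' : (1 : ℤ) ≤ (s : ℤ) := by exact_mod_cast hs1
    rcases min_cases ((A.x t u : ℤ)) ((c : ℤ) * S.dPlus + s) with ⟨e1, _⟩ | ⟨e1, _⟩ <;>
      rcases max_cases ((A.x (t + 1) u : ℤ)) ((c : ℤ) * S.dPlus) with ⟨e2, _⟩ | ⟨e2, _⟩ <;>
      rw [e1, e2] <;> linarith
  next => exact le_refl 0

lemma out_bound_aux {S : LBSetup V} (A : LBAlgo S) (s : ℕ) (hs1 : 1 ≤ s) (hs2 : s ≤ S.dSelf)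
    (hA : GoodSBalancer S A s) (c t : ℕ) (ht : 1 ≤ t) (u : V) :
    ToutD A t c u ≤ max ((A.x t u : ℤ) - (c : ℤ) * S.dPlus) 0 := by
  have hD : 1 ≤ S.dPlus := by unfold LBSetup.dPlus; omega
  obtain ⟨hf, hg, -⟩ := hA.2 t ht u
  set X := A.x t u with hXdef
  set q := X / S.dPlus with hqdef
  have hfb : ∀ v ∈ S.nbrs u, q ≤ A.f t u v ∧ A.f t u v ≤ q + 1 := by
    intro v hv
    have hadj : S.Adj u v := by simpa [LBSetup.nbrs] using hv
    rcases hf v hadj with h | h <;> rw [h]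
    · exact ⟨le_refl _, Nat.le_succ _⟩
    · exact ⟨le_cdiv_aux X _ hD, cdiv_le_succ_aux X _ hD⟩
  have hgb : ∀ i : Fin S.dSelf, q ≤ A.g t u i ∧ A.g t u i ≤ q + 1 := by
    intro i
    rcases hg i with h | h <;> rw [h]
    · exact ⟨le_refl _, Nat.le_succ _⟩
    · exact ⟨le_cdiv_aux X _ hD, cdiv_le_succ_aux X _ hD⟩
  have hcard : (S.nbrs u).card = S.d := S.regular u
  have hqD : q * S.dPlus ≤ X := Nat.div_mul_le_self X S.dPlus
  have hDsum : (S.dPlus : ℤ) = (S.d : ℤ) + (S.dSelf : ℤ) := by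
    unfold LBSetup.dPlus; push_cast; ring
  have hx : (X : ℤ) = (∑ v ∈ S.nbrs u, (A.f t u v : ℤ)) + ∑ i : Fin S.dSelf, (A.g t u i : ℤ) := by
    rw [hXdef, A.flow_out t ht u]; push_cast; ring
  by_cases hc : c ≤ q
  · have hcX : (c : ℤ) * (S.dPlus : ℤ) ≤ (X : ℤ) := by
      have : c * S.dPlus ≤ X := le_trans (Nat.mul_le_mul_right _ hc) hqD
      exact_mod_cast this
    rw [max_eq_left (by linarith : (0 : ℤ) ≤ (X : ℤ) - (c : ℤ) * S.dPlus)]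
    have h1 : ∀ v ∈ S.nbrs u, max ((A.f t u v : ℤ) - (c : ℤ)) 0 = (A.f t u v : ℤ) - (c : ℤ) := by
      intro v hv
      have h := (hfb v hv).1
      have : (c : ℤ) ≤ (A.f t u v : ℤ) := by exact_mod_cast le_trans hc h
      exact max_eq_left (by linarith)
    have h2 : ∀ i : Fin S.dSelf, max ((A.g t u i : ℤ) - (c : ℤ)) 0 = (A.g t u i : ℤ) - (c : ℤ) := by
      intro i
      have h := (hgb i).1
      have : (c : ℤ) ≤ (A.g t u i : ℤ) := by exact_mod_cast le_trans hc h
      exact max_eq_left (by linarith)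
    unfold ToutD
    rw [Finset.sum_congr rfl h1, Finset.sum_congr rfl fun i _ => h2 i,
      Finset.sum_sub_distrib, Finset.sum_sub_distrib, Finset.sum_const, Finset.sum_const,
      hcard, Finset.card_univ, Fintype.card_fin, nsmul_eq_mul, nsmul_eq_mul]
    have := hx
    rw [hDsum] at *
    linarith
  · refine le_trans ?_ (le_max_right _ 0)
    have h1 : ∀ v ∈ S.nbrs u, max ((A.f t u v : ℤ) - (c : ℤ)) 0 = 0 := by
      intro v hv
      have h := (hfb v hv).2
      have : (A.f t u v : ℤ) ≤ (c : ℤ) := by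
        have : A.f t u v ≤ c := by omega
        exact_mod_cast this
      exact max_eq_right (by linarith)
    have h2 : ∀ i : Fin S.dSelf, max ((A.g t u i : ℤ) - (c : ℤ)) 0 = 0 := by
      intro i
      have h := (hgb i).2
      have : (A.g t u i : ℤ) ≤ (c : ℤ) := by
        have : A.g t u i ≤ c := by omega
        exact_mod_cast this
      exact max_eq_right (by linarith)
    unfold ToutD
    rw [Finset.sum_congr rfl h1, Finset.sum_congr rfl fun i _ => h2 i]
    simp

lemma in_bound_aux {S : LBSetup V} (A : LBAlgo S) (s : ℕ) (hs1 : 1 ≤ s) (hs2 : s ≤ S.dSelf)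
    (hA : GoodSBalancer S A s) (c t : ℕ) (ht : 1 ≤ t) (u : V) :
    max ((A.x (t + 1) u : ℤ) - (c : ℤ) * S.dPlus) 0 ≤ TinD A t c u - Delta A s t c u := by
  have hD : 1 ≤ S.dPlus := by unfold LBSetup.dPlus; omega
  have hcard : (S.nbrs u).card = S.d := S.regular u
  have hDsum : (S.dPlus : ℤ) = (S.d : ℤ) + (S.dSelf : ℤ) := by
    unfold LBSetup.dPlus; push_cast; ring
  have hin : (A.x (t + 1) u : ℤ) =
      (∑ v ∈ S.nbrs u, (A.f t v u : ℤ)) + ∑ i : Fin S.dSelf, (A.g t u i : ℤ) := by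
    rw [A.flow_in t ht u]; push_cast; ring
  have hT1 : (A.x (t + 1) u : ℤ) - (c : ℤ) * S.dPlus ≤ TinD A t c u := by
    unfold TinD
    have e1 : ∑ v ∈ S.nbrs u, ((A.f t v u : ℤ) - (c : ℤ)) =
        (∑ v ∈ S.nbrs u, (A.f t v u : ℤ)) - (S.d : ℤ) * c := by
      rw [Finset.sum_sub_distrib, Finset.sum_const, hcard, nsmul_eq_mul]
    have e2 : ∑ i : Fin S.dSelf, ((A.g t u i : ℤ) - (c : ℤ)) =
        (∑ i : Fin S.dSelf, (A.g t u i : ℤ)) - (S.dSelf : ℤ) * c := by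
      rw [Finset.sum_sub_distrib, Finset.sum_const, Finset.card_univ, Fintype.card_fin,
        nsmul_eq_mul]
    have l1 : ∑ v ∈ S.nbrs u, ((A.f t v u : ℤ) - (c : ℤ)) ≤
        ∑ v ∈ S.nbrs u, max ((A.f t v u : ℤ) - (c : ℤ)) 0 :=
      Finset.sum_le_sum fun v _ => le_max_left _ _
    have l2 : ∑ i : Fin S.dSelf, ((A.g t u i : ℤ) - (c : ℤ)) ≤
        ∑ i : Fin S.dSelf, max ((A.g t u i : ℤ) - (c : ℤ)) 0 :=
      Finset.sum_le_sum fun i _ => le_max_left _ _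
    rw [e1] at l1; rw [e2] at l2
    rw [hDsum]
    linarith [hin]
  have hT0f : (0 : ℤ) ≤ ∑ v ∈ S.nbrs u, max ((A.f t v u : ℤ) - (c : ℤ)) 0 :=
    Finset.sum_nonneg fun v _ => le_max_right _ _
  have hT0g : (0 : ℤ) ≤ ∑ i : Fin S.dSelf, max ((A.g t u i : ℤ) - (c : ℤ)) 0 :=
    Finset.sum_nonneg fun i _ => le_max_right _ _
  have hT0 : (0 : ℤ) ≤ TinD A t c u := by unfold TinD; linarith
  unfold Delta
  split
  next hcond =>
    obtain ⟨hlt, hcX, hxs⟩ := hcond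
    obtain ⟨-, hg, hcnt⟩ := hA.2 t ht u
    set X := A.x t u with hXdef
    set q := X / S.dPlus with hqdef
    have hXc : c * S.dPlus < X := by exact_mod_cast hcX
    have hcq : c ≤ q := (Nat.le_div_iff_mul_le (by omega)).mpr hXc.le
    -- key inequality : min (X - c·D, s) ≤ TinD
    have hkey : min ((X : ℤ) - (c : ℤ) * S.dPlus) (s : ℤ) ≤ TinD A t c u := by
      rcases lt_or_eq_of_le hcq with hlt2 | heq
      · -- c < q : every self-loop carries ≥ q ≥ c + 1
        have hgge : ∀ i : Fin S.dSelf, (1 : ℤ) ≤ max ((A.g t u i : ℤ) - (c : ℤ)) 0 := by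
          intro i
          have hq : q ≤ A.g t u i := by
            rcases hg i with h | h <;> rw [h] <;>
              first
              | exact le_refl _
              | exact le_cdiv_aux X _ hD
          have : c + 1 ≤ A.g t u i := by omega
          have : (c : ℤ) + 1 ≤ (A.g t u i : ℤ) := by exact_mod_cast this
          exact le_trans (by linarith) (le_max_left _ _)
        have hsum : (S.dSelf : ℤ) ≤ ∑ i : Fin S.dSelf, max ((A.g t u i : ℤ) - (c : ℤ)) 0 := by
          calc (S.dSelf : ℤ) = ∑ _i : Fin S.dSelf, (1 : ℤ) := by simp
            _ ≤ _ := Finset.sum_le_sum fun i _ => hgge i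
        have hs2' : (s : ℤ) ≤ (S.dSelf : ℤ) := by exact_mod_cast hs2
        have : min ((X : ℤ) - (c : ℤ) * S.dPlus) (s : ℤ) ≤ (s : ℤ) := min_le_right _ _
        unfold TinD
        linarith
      · -- c = q : count self-loops carrying ⌈X/D⌉
        have h1 := Nat.div_add_mod X S.dPlus
        have h2 : X % S.dPlus < S.dPlus := Nat.mod_lt _ (by omega)
        have hcD : c * S.dPlus = S.dPlus * q := by rw [heq]; ring
        have hr0 : X % S.dPlus ≠ 0 := by
          rw [hcD] at hXc
          rw [← hqdef] at h1
          omega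
        have hcdiv : cdiv X S.dPlus = q + 1 := cdiv_eq_succ_aux X S.dPlus hD hr0
        set P := Finset.univ.filter fun i : Fin S.dSelf =>
          A.g t u i = cdiv X S.dPlus with hPdef
        have hsumP : (P.card : ℤ) ≤ ∑ i : Fin S.dSelf, max ((A.g t u i : ℤ) - (c : ℤ)) 0 := by
          have step1 : (P.card : ℤ) = ∑ _i ∈ P, (1 : ℤ) := by simp
          have step2 : ∑ _i ∈ P, (1 : ℤ) ≤ ∑ i ∈ P, max ((A.g t u i : ℤ) - (c : ℤ)) 0 := by
            refine Finset.sum_le_sum fun i hi => ?_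
            have hgi : A.g t u i = q + 1 := by
              have := (Finset.mem_filter.mp hi).2
              rw [this, hcdiv]
            have hgi' : (A.g t u i : ℤ) = (q : ℤ) + 1 := by exact_mod_cast hgi
            have hcq' : (c : ℤ) = (q : ℤ) := by exact_mod_cast heq
            refine le_trans (by rw [hgi', hcq']; linarith) (le_max_left _ _)
          have step3 : ∑ i ∈ P, max ((A.g t u i : ℤ) - (c : ℤ)) 0 ≤
              ∑ i : Fin S.dSelf, max ((A.g t u i : ℤ) - (c : ℤ)) 0 :=
            Finset.sum_le_sum_of_subset_of_nonneg (Finset.filter_subset _ _)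
              fun i _ _ => le_max_right _ _
          linarith
        have hmin : min s (X % S.dPlus) ≤ P.card := hcnt
        have hmin' : (min s (X % S.dPlus) : ℤ) ≤ (P.card : ℤ) := by exact_mod_cast hmin
        have hmodeq : ((X % S.dPlus : ℕ) : ℤ) = (X : ℤ) - (c : ℤ) * S.dPlus := by
          rw [← hqdef] at h1
          have h1' : (S.dPlus : ℤ) * (q : ℤ) + ((X % S.dPlus : ℕ) : ℤ) = (X : ℤ) := by
            exact_mod_cast h1
          have hcD' : (c : ℤ) * (S.dPlus : ℤ) = (S.dPlus : ℤ) * (q : ℤ) := by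
            exact_mod_cast hcD
          linarith
        have hmincast : (min s (X % S.dPlus) : ℤ) =
            min ((s : ℕ) : ℤ) ((X % S.dPlus : ℕ) : ℤ) := by push_cast; rfl
        rw [hmincast, hmodeq] at hmin'
        unfold TinD
        rw [min_comm] at hmin'
        linarith
    -- now conclude by case analysis on the min/max
    rcases max_cases ((A.x (t + 1) u : ℤ) - (c : ℤ) * S.dPlus) 0 with ⟨e1, _⟩ | ⟨e1, _⟩ <;>
      rcases min_cases ((X : ℤ)) ((c : ℤ) * S.dPlus + s) with ⟨e2, _⟩ | ⟨e2, _⟩ <;>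
      rcases max_cases ((A.x (t + 1) u : ℤ)) ((c : ℤ) * S.dPlus) with ⟨e3, _⟩ | ⟨e3, _⟩ <;>
      rcases min_cases ((X : ℤ) - (c : ℤ) * S.dPlus) ((s : ℤ)) with ⟨e4, h4⟩ | ⟨e4, h4⟩ <;>
      rw [e1, e2, e3] <;> rw [e4] at hkey <;> linarith
  next =>
    rw [sub_zero]
    exact max_le hT1 hT0

/-- **Lemma 2 (monotonicity of the potential `φ`).** For a good `s`-balancer, for every
time step `t ≥ 1` and every `c ∈ ℕ`, `φ_{t+1}(c) ≤ φ_t(c) − Σ_u Δ_{t+1}(c,u)`;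
in particular `φ` is non-increasing in time. -/
theorem phi_potential_drop (S : LBSetup V) (A : LBAlgo S) (s : ℕ)
    (hs1 : 1 ≤ s) (hs2 : s ≤ S.dSelf) (hA : GoodSBalancer S A s) (c : ℕ) :
    ∀ t, 1 ≤ t →
      phi A (t + 1) c ≤ phi A t c - ∑ u : V, Delta A s t c u ∧
      phi A (t + 1) c ≤ phi A t c := by
  intro t ht
  have hswap : ∀ u : V, True := fun _ => trivial
  have h1 : phi A (t + 1) c ≤ ∑ u : V, (TinD A t c u - Delta A s t c u) := by
    unfold phi
    exact Finset.sum_le_sum fun u _ => in_bound_aux A s hs1 hs2 hA c t ht u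
  have h2 : ∑ u : V, TinD A t c u = ∑ u : V, ToutD A t c u := by
    unfold TinD ToutD
    rw [Finset.sum_add_distrib, Finset.sum_add_distrib]
    congr 1
    have hadj : ∀ a b : V, S.Adj a b = S.Adj b a := fun a b =>
      Bool.eq_iff_iff.mpr ⟨fun h => S.symm a b h, fun h => S.symm b a h⟩
    calc ∑ u : V, ∑ v ∈ S.nbrs u, max ((A.f t v u : ℤ) - (c : ℤ)) 0
        = ∑ u : V, ∑ v : V, if S.Adj u v then max ((A.f t v u : ℤ) - (c : ℤ)) 0 else 0 := by
          simp [LBSetup.nbrs, Finset.sum_filter]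
      _ = ∑ v : V, ∑ u : V, if S.Adj u v then max ((A.f t v u : ℤ) - (c : ℤ)) 0 else 0 :=
          Finset.sum_comm
      _ = ∑ u : V, ∑ v : V, if S.Adj u v then max ((A.f t u v : ℤ) - (c : ℤ)) 0 else 0 := by
          refine Finset.sum_congr rfl fun u _ => Finset.sum_congr rfl fun v _ => ?_
          rw [hadj v u]
      _ = ∑ u : V, ∑ v ∈ S.nbrs u, max ((A.f t u v : ℤ) - (c : ℤ)) 0 := by
          simp [LBSetup.nbrs, Finset.sum_filter]
  have h3 : ∑ u : V, ToutD A t c u ≤ phi A t c := by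
    unfold phi
    exact Finset.sum_le_sum fun u _ => out_bound_aux A s hs1 hs2 hA c t ht u
  have key : phi A (t + 1) c ≤ phi A t c - ∑ u : V, Delta A s t c u := by
    have hsub : ∑ u : V, (TinD A t c u - Delta A s t c u) =
        (∑ u : V, TinD A t c u) - ∑ u : V, Delta A s t c u := Finset.sum_sub_distrib _ _
    rw [hsub, h2] at h1
    linarith
  have hnn : 0 ≤ ∑ u : V, Delta A s t c u :=
    Finset.sum_nonneg fun u _ => delta_nonneg_aux A s hs1 t c u
  exact ⟨key, by linarith⟩
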